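/- Let A ⊆ [0,1] be the set of binary expansions with alternating zero-blocks and free blocks both of lengths 1, 2, 4, ..., 2^n, .... Then the Hausdorff dimension of A equals 1/3. -/

import Mathlib

set_option maxHeartbeats 1000000

/-- Start position of the `n`-th zero-block, when the zero-blocks and free blocks
both have lengths `L 0, L 1, L 2, ...` and alternate (zeros first). -/
def blockStart (L : ℕ → ℕ) : ℕ → ℕ
  | 0 => 0
  | n + 1 => blockStart L n + 2 * L n

/-- `k` is a position (0-indexed, counting binary digits after the point) lying in
one of the zero-blocks. -/
def zeroPos (L : ℕ → ℕ) (k : ℕ) : Prop :=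
  ∃ n, blockStart L n ≤ k ∧ k < blockStart L n + L n

/-- The set of reals in `[0,1]` whose binary expansion vanishes on the zero-blocks
determined by `L` and is arbitrary in `{0,1}` on the alternating free blocks. -/
noncomputable def genSet (L : ℕ → ℕ) : Set ℝ :=
  { x : ℝ | ∃ d : ℕ → Bool, (∀ k, zeroPos L k → d k = false) ∧
      x = ∑' k : ℕ, if d k then ((2 : ℝ)⁻¹) ^ (k + 1) else 0 }

namespace S18

open scoped NNReal ENNReal Topology
open Filter MeasureTheory

abbrev L : ℕ → ℕ := fun n => 2 ^ n

abbrev bs (n : ℕ) : ℕ := blockStart L n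

lemma bs_succ (n : ℕ) : bs (n + 1) = bs n + 2 * 2 ^ n := rfl

lemma bs_add_two (n : ℕ) : bs n + 2 = 2 ^ (n + 1) := by
  induction n with
  | zero => rfl
  | succ n ih => rw [bs_succ]; rw [pow_succ 2 (n+1)]; omega

lemma le_bs (n : ℕ) : n ≤ bs n := by
  induction n with
  | zero => simp [bs, blockStart]
  | succ n ih =>
    have : 1 ≤ 2 ^ n := Nat.one_le_two_pow
    rw [bs_succ]; omega

lemma bs_mono : Monotone bs := by
  apply monotone_nat_of_le_succ
  intro n; rw [bs_succ]; omega

lemma bsAdd_mono : Monotone (fun n => bs n + 2 ^ n) := by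
  apply monotone_nat_of_le_succ
  intro n; rw [bs_succ, pow_succ]; omega

/-- free positions -/
def freeP (k : ℕ) : Prop := ¬ zeroPos L k

lemma zeroPos_def (k : ℕ) : zeroPos L k ↔ ∃ n, bs n ≤ k ∧ k < bs n + 2 ^ n := Iff.rfl

instance : DecidablePred (zeroPos L) := by
  intro k
  apply decidable_of_iff (∃ n ≤ k, bs n ≤ k ∧ k < bs n + 2 ^ n)
  constructor
  · rintro ⟨n, _, h⟩; exact ⟨n, h⟩
  · rintro ⟨n, h1, h2⟩; exact ⟨n, le_trans (le_bs n) h1, h1, h2⟩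

instance : DecidablePred freeP := fun k => instDecidableNot

lemma zero_mem {n k : ℕ} (h1 : bs n ≤ k) (h2 : k < bs n + 2 ^ n) : zeroPos L k := ⟨n, h1, h2⟩

lemma free_mem {n k : ℕ} (h1 : bs n + 2 ^ n ≤ k) (h2 : k < bs (n + 1)) : freeP k := by
  rintro ⟨j, hj1, hj2⟩
  have hj1' : bs j ≤ k := hj1
  have hj2' : k < bs j + 2 ^ j := hj2
  rcases le_or_gt j n with hjn | hjn
  · have := bsAdd_mono hjn
    simp only at this
    omega
  · have h3 := bs_mono hjn
    have h4 : bs (n+1) ≤ bs j := h3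
    omega

lemma freeP_infinite : (setOf freeP).Infinite := by
  apply Set.infinite_of_not_bddAbove
  rintro ⟨B, hB⟩
  have h1 : freeP (bs B + 2 ^ B) := by
    apply free_mem le_rfl
    rw [bs_succ]
    have : 1 ≤ 2 ^ B := Nat.one_le_two_pow
    omega
  have := hB h1
  have := le_bs B
  have : 1 ≤ 2 ^ B := Nat.one_le_two_pow
  omega

/-- number of free positions below `m` -/
def F (m : ℕ) : ℕ := Nat.count freeP m

/-- the `i`-th free position -/
noncomputable def pth (i : ℕ) : ℕ := Nat.nth freeP i

lemma count_add_of_free {a t : ℕ} (h : ∀ j, a ≤ j → j < a + t → freeP j) :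
    F (a + t) = F a + t := by
  induction t with
  | zero => rfl
  | succ t ih =>
    have : F (a + t + 1) = F (a + t) + 1 := by
      show Nat.count freeP (a + t + 1) = Nat.count freeP (a + t) + 1
      rw [Nat.count_succ_eq_succ_count_iff]
      exact h _ (by omega) (by omega)
    rw [← Nat.add_assoc] at *
    rw [this, ih (fun j h1 h2 => h j h1 (by omega))]
    omega

lemma count_add_of_zero {a t : ℕ} (h : ∀ j, a ≤ j → j < a + t → ¬ freeP j) :
    F (a + t) = F a := by
  induction t with
  | zero => rfl
  | succ t ih =>
    have : F (a + t + 1) = F (a + t) := by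
      show Nat.count freeP (a + t + 1) = Nat.count freeP (a + t)
      rw [Nat.count_succ_eq_count_iff]
      exact h _ (by omega) (by omega)
    rw [← Nat.add_assoc, this, ih (fun j h1 h2 => h j h1 (by omega))]

lemma F_bs (n : ℕ) : F (bs n) + 1 = 2 ^ n ∧ F (bs n + 2 ^ n) + 1 = 2 ^ n := by
  induction n with
  | zero =>
    constructor
    · rfl
    · have : F (0 + 1) = F 0 := by
        show Nat.count freeP (0 + 1) = Nat.count freeP 0
        rw [Nat.count_succ_eq_count_iff]
        intro h; exact h (zero_mem (n := 0) le_rfl (by norm_num))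
      simpa [bs, blockStart, F] using this
  | succ n ih =>
    have hmid : F (bs n + 2 ^ n) + 1 = 2 ^ n := ih.2
    have h1 : F (bs (n + 1)) = F (bs n + 2 ^ n) + 2 ^ n := by
      have : bs (n + 1) = (bs n + 2 ^ n) + 2 ^ n := by rw [bs_succ]; ring
      rw [this]
      exact count_add_of_free (fun j hj1 hj2 => free_mem hj1 (by rw [bs_succ]; omega))
    have h2 : F (bs (n + 1) + 2 ^ (n + 1)) = F (bs (n + 1)) := by
      exact count_add_of_zero (fun j hj1 hj2 h => h (zero_mem hj1 hj2))
    constructor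
    · rw [h1, pow_succ]; omega
    · rw [h2, h1, pow_succ]; omega

lemma exists_block (m : ℕ) : ∃ n, bs n ≤ m ∧ m < bs (n + 1) := by
  induction m with
  | zero => exact ⟨0, le_rfl, by rw [bs_succ]; simp [bs, blockStart]⟩
  | succ m ih =>
    obtain ⟨n, h1, h2⟩ := ih
    rcases lt_or_eq_of_le (Nat.succ_le_of_lt h2) with h | h
    · exact ⟨n, by omega, h⟩
    · refine ⟨n + 1, by omega, ?_⟩
      rw [bs_succ (n+1)]
      have : 1 ≤ 2 ^ (n+1) := Nat.one_le_two_pow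
      omega

lemma count_bound (m : ℕ) : m ≤ 3 * F m + 4 := by
  obtain ⟨n, h1, h2⟩ := exists_block m
  have hFbs := (F_bs n).1
  have hFmid := (F_bs n).2
  have hbs2 := bs_add_two n
  have h2n : 1 ≤ 2 ^ n := Nat.one_le_two_pow
  rcases lt_or_ge m (bs n + 2 ^ n) with h | h
  · have : F (bs n) ≤ F m := Nat.count_monotone _ h1
    omega
  · obtain ⟨t, ht⟩ := Nat.exists_eq_add_of_le h
    have : F m = F (bs n + 2 ^ n) + t := by
      rw [ht]
      exact count_add_of_free (fun j hj1 hj2 => free_mem hj1 (by omega))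
    omega


/-- summand -/
noncomputable def trm (d : ℕ → Bool) (j : ℕ) : ℝ := if d j then ((2 : ℝ)⁻¹) ^ (j + 1) else 0

lemma trm_nonneg (d : ℕ → Bool) (j : ℕ) : 0 ≤ trm d j := by
  unfold trm; split <;> positivity

lemma trm_le (d : ℕ → Bool) (j : ℕ) : trm d j ≤ ((2 : ℝ)⁻¹) ^ (j + 1) := by
  unfold trm; split
  · exact le_rfl
  · positivity

lemma summable_geom1 : Summable (fun j : ℕ => ((2 : ℝ)⁻¹) ^ (j + 1)) := by
  have h : Summable (fun j : ℕ => ((2 : ℝ)⁻¹) ^ j) :=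
    summable_geometric_of_lt_one (by norm_num) (by norm_num)
  simpa [pow_succ] using h.mul_right (2 : ℝ)⁻¹

lemma summable_trm (d : ℕ → Bool) : Summable (trm d) :=
  Summable.of_nonneg_of_le (trm_nonneg d) (trm_le d) summable_geom1

/-- the value of a digit sequence -/
noncomputable def val (d : ℕ → Bool) : ℝ := ∑' j : ℕ, trm d j

lemma geo_sum_range (n : ℕ) : ∑ i ∈ Finset.range n, ((2 : ℝ)⁻¹) ^ (i + 1) = 1 - ((2 : ℝ)⁻¹) ^ n := by
  induction n with
  | zero => simp
  | succ n ih => rw [Finset.sum_range_succ, ih]; ring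

lemma tail_geom (N : ℕ) : ∑' j : ℕ, ((2 : ℝ)⁻¹) ^ (j + N + 1) = ((2 : ℝ)⁻¹) ^ N := by
  have h : ∀ j : ℕ, ((2 : ℝ)⁻¹) ^ (j + N + 1) = ((2 : ℝ)⁻¹) ^ j * ((2 : ℝ)⁻¹) ^ (N + 1) := by
    intro j; rw [← pow_add]; ring_nf
  rw [tsum_congr h, tsum_mul_right,
    tsum_geometric_of_lt_one (by norm_num) (by norm_num)]
  rw [pow_succ]
  ring

lemma summable_geom_shift (N : ℕ) : Summable (fun j : ℕ => ((2 : ℝ)⁻¹) ^ (j + N + 1)) := by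
  apply Summable.of_nonneg_of_le (fun j => by positivity) _ summable_geom1
  intro j
  exact pow_le_pow_of_le_one (by norm_num) (by norm_num) (by omega)

lemma sum_le_val (d : ℕ → Bool) (s : Finset ℕ) : ∑ j ∈ s, trm d j ≤ val d :=
  Summable.sum_le_tsum s (fun j _ => trm_nonneg d j) (summable_trm d)

lemma val_le (d : ℕ → Bool) (N : ℕ) :
    val d ≤ ∑ j ∈ Finset.range N, trm d j + ((2 : ℝ)⁻¹) ^ N := by
  have hsplit := (Summable.sum_add_tsum_nat_add N (summable_trm d)).symm
  rw [val, hsplit]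
  gcongr
  rw [← tail_geom N]
  exact Summable.tsum_le_tsum (fun j => trm_le d (j + N)) ((summable_nat_add_iff N).2 (summable_trm d))
    (summable_geom_shift N)

lemma val_add_single_le (d : ℕ → Bool) {N m : ℕ} (hNm : N ≤ m) (hm : d m = false) :
    val d + ((2 : ℝ)⁻¹) ^ (m + 1) ≤ ∑ j ∈ Finset.range N, trm d j + ((2 : ℝ)⁻¹) ^ N := by
  set g : ℕ → ℝ := fun j => trm d j + (if j = m then ((2 : ℝ)⁻¹) ^ (m + 1) else 0) with hg
  have hsing : Summable (fun j : ℕ => if j = m then ((2 : ℝ)⁻¹) ^ (m + 1) else 0) :=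
    ⟨_, hasSum_ite_eq m _⟩
  have hsumg : Summable g := (summable_trm d).add hsing
  have h1 : val d + ((2 : ℝ)⁻¹) ^ (m + 1) = ∑' j, g j := by
    rw [val, hg, Summable.tsum_add (summable_trm d) hsing, tsum_ite_eq]
  rw [h1]
  have hsplit := (Summable.sum_add_tsum_nat_add N hsumg).symm
  rw [hsplit]
  have hgeq : ∀ j ∈ Finset.range N, g j = trm d j := by
    intro j hj
    simp only [Finset.mem_range] at hj
    have : j ≠ m := by omega
    simp [hg, this]
  rw [Finset.sum_congr rfl hgeq]
  gcongr
  rw [← tail_geom N]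
  refine Summable.tsum_le_tsum ?_ ((summable_nat_add_iff N).2 hsumg) (summable_geom_shift N)
  intro j
  by_cases hjm : j + N = m
  · have hgv : g (j + N) = ((2 : ℝ)⁻¹) ^ (m + 1) := by
      simp [hg, hjm, trm, hm]
    rw [hgv, ← hjm]
  · simp only [hg, hjm, if_false, add_zero]
    exact trm_le d (j + N)

/-- Lemma B -/
lemma val_sub_ge {d d' : ℕ → Bool} {k m : ℕ} (heq : ∀ j < k, d j = d' j)
    (hk : d k = true) (hk' : d' k = false) (hkm : k < m)
    (hm : d' m = true → d m = true) :
    val d' + ((2 : ℝ)⁻¹) ^ (m + 1) ≤ val d := by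
  have hS : ∑ j ∈ Finset.range k, trm d' j = ∑ j ∈ Finset.range k, trm d j := by
    apply Finset.sum_congr rfl
    intro j hj
    simp only [Finset.mem_range] at hj
    rw [trm, trm, heq j hj]
  have hsum_d : ∑ j ∈ Finset.range (k + 1), trm d j
      = ∑ j ∈ Finset.range k, trm d j + ((2 : ℝ)⁻¹) ^ (k + 1) := by
    rw [Finset.sum_range_succ, trm, hk]; simp
  have hsum_d' : ∑ j ∈ Finset.range (k + 1), trm d' j
      = ∑ j ∈ Finset.range k, trm d j := by
    rw [Finset.sum_range_succ, trm, hk', hS]; simp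
  rcases (Bool.eq_false_or_eq_true (d' m)).symm with hd'm | hd'm
  · -- d' m = false
    have h1 := val_add_single_le d' (show k + 1 ≤ m by omega) hd'm
    rw [hsum_d'] at h1
    have h2 : ∑ j ∈ Finset.range (k + 1), trm d j ≤ val d := sum_le_val d _
    rw [hsum_d] at h2
    linarith
  · -- d' m = true hence d m = true
    have hdm := hm hd'm
    have h1 : val d' ≤ ∑ j ∈ Finset.range k, trm d j + ((2 : ℝ)⁻¹) ^ (k + 1) := by
      have := val_le d' (k + 1)
      rw [hsum_d'] at this
      linarith
    have h2 : ∑ j ∈ insert m (Finset.range (k + 1)), trm d j ≤ val d := sum_le_val d _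
    rw [Finset.sum_insert (by simp; omega), hsum_d, trm, hdm] at h2
    simp only [if_true] at h2
    linarith

/-- agreement below `N` pins down the value within `2⁻¹ ^ N`. -/
lemma val_agree_below {d d' : ℕ → Bool} {N : ℕ} (heq : ∀ j < N, d j = d' j) :
    |val d - val d'| ≤ ((2 : ℝ)⁻¹) ^ N := by
  have hS : ∑ j ∈ Finset.range N, trm d' j = ∑ j ∈ Finset.range N, trm d j := by
    apply Finset.sum_congr rfl
    intro j hj
    simp only [Finset.mem_range] at hj
    rw [trm, trm, heq j hj]
  have h1 := val_le d N
  have h2 := val_le d' N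
  have h3 := sum_le_val d (Finset.range N)
  have h4 := sum_le_val d' (Finset.range N)
  rw [hS] at h2 h4
  rw [abs_le]
  constructor <;> linarith

/-- Lemma A : bracket -/
lemma val_bracket {b b' : ℕ → Bool} {I J : ℕ} (hIJ : I < J)
    (heq : ∀ i < I, b i = b' i) (hbI : b I = true) (hb'I : b' I = false)
    (hmid : ∀ i, I < i → i < J → b i = false ∧ b' i = true) :
    |val b - val b'| ≤ 2 * ((2 : ℝ)⁻¹) ^ J := by
  have hS : ∑ i ∈ Finset.range I, trm b' i = ∑ i ∈ Finset.range I, trm b i := by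
    apply Finset.sum_congr rfl
    intro i hi
    simp only [Finset.mem_range] at hi
    rw [trm, trm, heq i hi]
  have hico : Finset.range J = Finset.range (I + 1) ∪ Finset.Ico (I + 1) J := by
    rw [Finset.range_eq_Ico, Finset.range_eq_Ico]
    rw [Finset.Ico_union_Ico_eq_Ico (by omega) (by omega)]
  have hdisj : Disjoint (Finset.range (I + 1)) (Finset.Ico (I + 1) J) := by
    simp [Finset.disjoint_left]
    intro a ha; omega
  have hsum_b : ∑ i ∈ Finset.range J, trm b i
      = ∑ i ∈ Finset.range I, trm b i + ((2 : ℝ)⁻¹) ^ (I + 1) := by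
    rw [hico, Finset.sum_union hdisj, Finset.sum_range_succ]
    have : ∑ i ∈ Finset.Ico (I + 1) J, trm b i = 0 := by
      apply Finset.sum_eq_zero
      intro i hi
      simp only [Finset.mem_Ico] at hi
      rw [trm, (hmid i (by omega) hi.2).1]; simp
    rw [this, trm, hbI]; simp
  have hsum_b' : ∑ i ∈ Finset.range J, trm b' i
      = ∑ i ∈ Finset.range I, trm b i + (((2 : ℝ)⁻¹) ^ (I + 1) - ((2 : ℝ)⁻¹) ^ J) := by
    rw [hico, Finset.sum_union hdisj, Finset.sum_range_succ]
    have h1 : ∑ i ∈ Finset.Ico (I + 1) J, trm b' i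
        = ∑ i ∈ Finset.Ico (I + 1) J, ((2 : ℝ)⁻¹) ^ (i + 1) := by
      apply Finset.sum_congr rfl
      intro i hi
      simp only [Finset.mem_Ico] at hi
      rw [trm, (hmid i (by omega) hi.2).2]; simp
    have h2 : ∑ i ∈ Finset.Ico (I + 1) J, ((2 : ℝ)⁻¹) ^ (i + 1)
        = (1 - ((2 : ℝ)⁻¹) ^ J) - (1 - ((2 : ℝ)⁻¹) ^ (I + 1)) := by
      have g1 : (∑ i ∈ Finset.Ico 0 (I + 1), ((2 : ℝ)⁻¹) ^ (i + 1))
          + ∑ i ∈ Finset.Ico (I + 1) J, ((2 : ℝ)⁻¹) ^ (i + 1)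
          = ∑ i ∈ Finset.Ico 0 J, ((2 : ℝ)⁻¹) ^ (i + 1) :=
        Finset.sum_Ico_consecutive _ (by omega) (by omega)
      have g2 := geo_sum_range J
      have g3 := geo_sum_range (I + 1)
      rw [Finset.range_eq_Ico] at g2 g3
      linarith
    rw [h1, h2, trm, hb'I, hS]; simp; try ring
  have u1 := val_le b J
  have u2 := val_le b' J
  have l1 := sum_le_val b (Finset.range J)
  have l2 := sum_le_val b' (Finset.range J)
  rw [hsum_b] at u1 l1
  rw [hsum_b'] at u2 l2
  rw [abs_le]
  constructor <;> linarith

/-! ### The digit-reading map and its Hölder property -/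

/-- admissible digit sequences -/
def Adm (d : ℕ → Bool) : Prop := ∀ k, zeroPos L k → d k = false

lemma mem_genSet {x : ℝ} : x ∈ genSet L ↔ ∃ d, Adm d ∧ x = val d := Iff.rfl

lemma val_lt_of {d d' : ℕ → Bool} (hd' : Adm d') {k : ℕ}
    (heq : ∀ j < k, d j = d' j) (hk : d k = true) (hk' : d' k = false) :
    val d' < val d := by
  set z := bs (k + 1) with hz
  have hzero : zeroPos L z := zero_mem le_rfl (by have : 0 < 2 ^ (k+1) := Nat.pow_pos (by norm_num); omega)
  have hkz : k < z := lt_of_lt_of_le (Nat.lt_succ_self k) (le_bs (k + 1))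
  have hb := val_sub_ge heq hk hk' hkz (by rw [hd' z hzero]; simp)
  have hpos : (0:ℝ) < ((2:ℝ)⁻¹) ^ (z + 1) := by positivity
  linarith

lemma val_injective {d d' : ℕ → Bool} (hd : Adm d) (hd' : Adm d') (h : val d = val d') :
    d = d' := by
  by_contra hne
  have hex : ∃ j, d j ≠ d' j := Function.ne_iff.mp hne
  set k := Nat.find hex with hkdef
  have hkne : d k ≠ d' k := Nat.find_spec hex
  have heq : ∀ j < k, d j = d' j := by
    intro j hj
    by_contra hc
    have : Nat.find hex ≤ j := Nat.find_le hc
    omega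
  rcases Bool.eq_false_or_eq_true (d k) with hdk | hdk
  · have hd'k : d' k = false := by
      rcases Bool.eq_false_or_eq_true (d' k) with h' | h'
      · exact absurd (hdk.trans h'.symm) hkne
      · exact h'
    have := val_lt_of hd' heq hdk hd'k
    linarith
  · have hd'k : d' k = true := by
      rcases Bool.eq_false_or_eq_true (d' k) with h' | h'
      · exact h'
      · exact absurd (hdk.trans h'.symm) hkne
    have := val_lt_of hd (fun j hj => (heq j hj).symm) hd'k hdk
    linarith

open scoped Classical in
/-- the map reading off the free digits -/
noncomputable def fA (x : ℝ) : ℝ :=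
  if h : x ∈ genSet L then val (fun i => Classical.choose h (pth i)) else 0

lemma fA_val {d : ℕ → Bool} (hd : Adm d) : fA (val d) = val (fun i => d (pth i)) := by
  have hx : val d ∈ genSet L := ⟨d, hd, rfl⟩
  rw [fA, dif_pos hx]
  obtain ⟨hadm, heq⟩ := Classical.choose_spec hx
  have : Classical.choose hx = d := val_injective hadm hd heq.symm
  rw [this]

lemma free_of_true {d : ℕ → Bool} (hd : Adm d) {k : ℕ} (hk : d k = true) : freeP k := by
  intro hz
  rw [hd k hz] at hk
  exact Bool.noConfusion hk

/-- The key real inequality. -/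
lemma key_real_ineq {J m : ℕ} (h : m ≤ 3 * J + 4) :
    2 * ((2:ℝ)⁻¹) ^ J ≤ 8 * (((2:ℝ)⁻¹) ^ (m + 1)) ^ ((3:ℝ)⁻¹) := by
  have h2 : (0:ℝ) < 2⁻¹ := by norm_num
  have e1 : (((2:ℝ)⁻¹) ^ (m + 1)) ^ ((3:ℝ)⁻¹) = ((2:ℝ)⁻¹) ^ (((m:ℝ) + 1) * 3⁻¹) := by
    rw [← Real.rpow_natCast ((2:ℝ)⁻¹) (m + 1), ← Real.rpow_mul (le_of_lt h2)]
    push_cast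
    ring_nf
  have e2 : ((2:ℝ)⁻¹) ^ J = ((2:ℝ)⁻¹) ^ ((J:ℝ)) := (Real.rpow_natCast _ J).symm
  rw [e1, e2]
  have hexp : ((m:ℝ) + 1) * 3⁻¹ - 2 ≤ (J:ℝ) := by
    have : (m:ℝ) ≤ 3 * (J:ℝ) + 4 := by exact_mod_cast h
    linarith
  have hmono : ((2:ℝ)⁻¹) ^ ((J:ℝ)) ≤ ((2:ℝ)⁻¹) ^ (((m:ℝ) + 1) * 3⁻¹ - 2) :=
    Real.rpow_le_rpow_of_exponent_ge h2 (by norm_num) hexp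
  have e3 : ((2:ℝ)⁻¹) ^ (((m:ℝ) + 1) * 3⁻¹ - 2)
      = ((2:ℝ)⁻¹) ^ (((m:ℝ) + 1) * 3⁻¹) * 4 := by
    rw [Real.rpow_sub h2]
    have : ((2:ℝ)⁻¹) ^ ((2:ℝ)) = 4⁻¹ := by
      rw [show ((2:ℝ)) = ((2:ℕ):ℝ) by norm_num, Real.rpow_natCast]
      norm_num
    rw [this]
    field_simp
  have hpos : (0:ℝ) < ((2:ℝ)⁻¹) ^ (((m:ℝ) + 1) * 3⁻¹) := Real.rpow_pos_of_pos h2 _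
  calc 2 * ((2:ℝ)⁻¹) ^ ((J:ℝ)) ≤ 2 * (((2:ℝ)⁻¹) ^ (((m:ℝ) + 1) * 3⁻¹) * 4) := by
        rw [← e3]; linarith
    _ = 8 * ((2:ℝ)⁻¹) ^ (((m:ℝ) + 1) * 3⁻¹) := by ring

lemma holder_pair {d d' : ℕ → Bool} (hd : Adm d) (hd' : Adm d') {k : ℕ}
    (heq : ∀ j < k, d j = d' j) (hk : d k = true) (hk' : d' k = false) :
    edist (fA (val d)) (fA (val d')) ≤ (8 : ℝ≥0∞) * edist (val d) (val d') ^ (((3⁻¹ : ℝ≥0)) : ℝ) := by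
  have hfk : freeP k := free_of_true hd hk
  set b : ℕ → Bool := fun i => d (pth i) with hbdef
  set b' : ℕ → Bool := fun i => d' (pth i) with hb'def
  set I : ℕ := F k with hIdef
  have hpthI : pth I = k := Nat.nth_count hfk
  have heqb : ∀ i < I, b i = b' i := by
    intro i hi
    have : pth i < k := Nat.nth_lt_of_lt_count hi
    exact heq _ this
  have hbI : b I = true := by rw [hbdef]; simp only []; rw [hpthI]; exact hk
  have hb'I : b' I = false := by rw [hb'def]; simp only []; rw [hpthI]; exact hk'
  have hmid_gen : ∀ i (m : ℕ), I < i → pth i < m →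
      (∀ j, k < j → j < m → freeP j → ¬(d j = false ∧ d' j = true) → False) →
      b i = false ∧ b' i = true := by
    intro i m hIi hpi hmin
    have hfree : freeP (pth i) := Nat.nth_mem_of_infinite freeP_infinite i
    have hki : k < pth i := by
      rw [← hpthI]
      exact (Nat.nth_lt_nth freeP_infinite).mpr hIi
    by_contra hc
    have hcc : ¬(d (pth i) = false ∧ d' (pth i) = true) := hc
    exact hmin (pth i) hki hpi hfree hcc
  rw [fA_val hd, fA_val hd']
  by_cases hQ : ∃ j, k < j ∧ freeP j ∧ ¬(d j = false ∧ d' j = true)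
  · -- a break exists
    have hspec := Nat.find_spec hQ
    set m := Nat.find hQ with hmdef
    obtain ⟨hkm, hfm, hbreak⟩ := hspec
    set J : ℕ := F m with hJdef
    have hIJ : I < J := Nat.count_strict_mono hfk hkm
    have hmid : ∀ i, I < i → i < J → b i = false ∧ b' i = true := by
      intro i h1 h2
      apply hmid_gen i m h1 (Nat.nth_lt_of_lt_count h2)
      intro j hj1 hj2 hj3 hj4
      have hle : Nat.find hQ ≤ j := Nat.find_le ⟨hj1, hj3, hj4⟩
      omega
    have hA := val_bracket hIJ heqb hbI hb'I hmid
    have hmimp : d' m = true → d m = true := by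
      intro h'
      rcases Bool.eq_false_or_eq_true (d m) with h | h
      · exact h
      · exact absurd ⟨h, h'⟩ hbreak
    have hB := val_sub_ge heq hk hk' hkm hmimp
    -- now transfer to edist
    have hcount := count_bound m
    have hkey := key_real_ineq (J := J) (m := m) (by rw [hJdef]; exact hcount)
    have hedist1 : edist (val b) (val b') = ENNReal.ofReal |val b - val b'| := by
      rw [edist_dist, Real.dist_eq]
    have hedist2 : edist (val d) (val d') = ENNReal.ofReal |val d - val d'| := by
      rw [edist_dist, Real.dist_eq]
    rw [hedist1, hedist2]
    have hppos : (0:ℝ) < ((2:ℝ)⁻¹) ^ (m + 1) := by positivity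
    have habs : |val d - val d'| ≥ ((2:ℝ)⁻¹) ^ (m + 1) := by
      rw [abs_of_nonneg (by linarith)]
      linarith
    have hpow : (((3⁻¹ : ℝ≥0)) : ℝ) = (3:ℝ)⁻¹ := by
      norm_num
    rw [hpow]
    calc ENNReal.ofReal |val b - val b'|
        ≤ ENNReal.ofReal (2 * ((2:ℝ)⁻¹) ^ J) := ENNReal.ofReal_le_ofReal hA
      _ ≤ ENNReal.ofReal (8 * (((2:ℝ)⁻¹) ^ (m + 1)) ^ ((3:ℝ)⁻¹)) :=
          ENNReal.ofReal_le_ofReal hkey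
      _ = (8 : ℝ≥0∞) * ENNReal.ofReal ((((2:ℝ)⁻¹) ^ (m + 1)) ^ ((3:ℝ)⁻¹)) := by
          rw [ENNReal.ofReal_mul (by norm_num)]
          try norm_num
      _ = (8 : ℝ≥0∞) * ENNReal.ofReal (((2:ℝ)⁻¹) ^ (m + 1)) ^ ((3:ℝ)⁻¹) := by
          rw [ENNReal.ofReal_rpow_of_pos (by positivity)]
      _ ≤ (8 : ℝ≥0∞) * ENNReal.ofReal |val d - val d'| ^ ((3:ℝ)⁻¹) := by
          have := ENNReal.ofReal_le_ofReal habs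
          gcongr
  · -- no break : the images coincide
    push_neg at hQ
    have hzero : val b = val b' := by
      have hbound : ∀ J', I < J' → |val b - val b'| ≤ 2 * ((2:ℝ)⁻¹) ^ J' := by
        intro J' hJ'
        apply val_bracket hJ' heqb hbI hb'I
        intro i h1 h2
        apply hmid_gen i (pth i + 1) h1 (Nat.lt_succ_self _)
        intro j hj1 _ hj3 hj4
        exact hj4 (hQ j hj1 hj3)
      have hle : ∀ ε > (0:ℝ), |val b - val b'| ≤ ε := by
        intro ε hε
        obtain ⟨J', hJ'⟩ := pow_unbounded_of_one_lt (ε⁻¹ * 2) (by norm_num : (1:ℝ) < 2)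
        have h2J : (2:ℝ) ^ (I + J' + 1) > ε⁻¹ * 2 := by
          calc (2:ℝ) ^ (I + J' + 1) ≥ 2 ^ J' := by
                apply pow_le_pow_right₀ (by norm_num)
                omega
            _ > ε⁻¹ * 2 := hJ'
        have := hbound (I + J' + 1) (by omega)
        have hh : 2 * ((2:ℝ)⁻¹) ^ (I + J' + 1) ≤ ε := by
          rw [inv_pow]
          rw [mul_inv_le_iff₀' (by positivity)]
          calc (2:ℝ) ≤ ε * (ε⁻¹ * 2) := by
                rw [← mul_assoc, mul_inv_cancel₀ (ne_of_gt hε), one_mul]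
            _ ≤ ε * 2 ^ (I + J' + 1) := by
                apply mul_le_mul_of_nonneg_left (le_of_lt h2J) (le_of_lt hε)
            _ = 2 ^ (I + J' + 1) * ε := by ring
        linarith
      have habs0 : |val b - val b'| ≤ 0 := by
        apply le_of_forall_pos_le_add
        intro ε hε
        simpa using hle ε hε
      have : val b - val b' = 0 := abs_eq_zero.mp (le_antisymm habs0 (abs_nonneg _))
      linarith
    rw [hzero]
    simp [hb'def]

lemma holderA : HolderOnWith 8 3⁻¹ fA (genSet L) := by
  intro x hx y hy
  rw [mem_genSet] at hx hy
  obtain ⟨d, hd, hxe⟩ := hx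
  obtain ⟨d', hd', hye⟩ := hy
  subst hxe; subst hye
  by_cases hdd : d = d'
  · subst hdd
    simp
  · have hex : ∃ j, d j ≠ d' j := Function.ne_iff.mp hdd
    have hkne : d (Nat.find hex) ≠ d' (Nat.find hex) := Nat.find_spec hex
    have heq : ∀ j < Nat.find hex, d j = d' j := by
      intro j hj
      by_contra hc
      have : Nat.find hex ≤ j := Nat.find_le hc
      omega
    rcases Bool.eq_false_or_eq_true (d (Nat.find hex)) with hdk | hdk
    · have hd'k : d' (Nat.find hex) = false := by
        rcases Bool.eq_false_or_eq_true (d' (Nat.find hex)) with h' | h'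
        · exact absurd (hdk.trans h'.symm) hkne
        · exact h'
      exact holder_pair hd hd' heq hdk hd'k
    · have hd'k : d' (Nat.find hex) = true := by
        rcases Bool.eq_false_or_eq_true (d' (Nat.find hex)) with h' | h'
        · exact h'
        · exact absurd (hdk.trans h'.symm) hkne
      rw [edist_comm, edist_comm (val d)]
      exact holder_pair hd' hd (fun j hj => (heq j hj).symm) hd'k hdk

lemma image_Ico : Set.Ico (0:ℝ) 1 ⊆ fA '' (genSet L) := by
  rintro y ⟨hy0, hy1⟩
  -- binary expansion of y
  set a : ℕ → ℤ := fun n => ⌊(2:ℝ) ^ n * y⌋ with hadef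
  have ha0 : a 0 = 0 := by
    simp only [hadef, pow_zero, one_mul]
    rw [Int.floor_eq_zero_iff]
    exact ⟨hy0, hy1⟩
  have hstep : ∀ n, a (n+1) = 2 * a n ∨ a (n+1) = 2 * a n + 1 := by
    intro n
    have hl : 2 * a n ≤ a (n + 1) := by
      rw [hadef]
      apply Int.le_floor.mpr
      push_cast
      have := Int.floor_le ((2:ℝ) ^ n * y)
      calc (2:ℝ) * (⌊(2:ℝ) ^ n * y⌋ : ℝ) ≤ 2 * ((2:ℝ) ^ n * y) := by linarith
        _ = (2:ℝ) ^ (n+1) * y := by ring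
    have hu : a (n + 1) < 2 * a n + 2 := by
      rw [hadef]
      apply Int.floor_lt.mpr
      push_cast
      have := Int.lt_floor_add_one ((2:ℝ) ^ n * y)
      calc (2:ℝ) ^ (n+1) * y = 2 * ((2:ℝ) ^ n * y) := by ring
        _ < 2 * ((⌊(2:ℝ) ^ n * y⌋ : ℝ) + 1) := by linarith
        _ = 2 * (⌊(2:ℝ) ^ n * y⌋ : ℝ) + 2 := by ring
    omega
  set bb : ℕ → Bool := fun n => decide (a (n+1) = 2 * a n + 1) with hbbdef
  have htrm : ∀ n, trm bb n = ((a (n+1) : ℝ) - 2 * (a n : ℝ)) * ((2:ℝ)⁻¹) ^ (n+1) := by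
    intro n
    rcases hstep n with h | h
    · have hb : bb n = false := by
        simp only [hbbdef, decide_eq_false_iff_not]
        omega
      rw [trm, hb, h]
      push_cast
      ring
    · have hb : bb n = true := by
        simp only [hbbdef, decide_eq_true_eq]
        exact h
      rw [trm, hb, h]
      simp only [if_true]
      push_cast
      ring
  have hpartial : ∀ N, ∑ n ∈ Finset.range N, trm bb n = (a N : ℝ) * ((2:ℝ)⁻¹) ^ N := by
    intro N
    set g : ℕ → ℝ := fun n => (a n : ℝ) * ((2:ℝ)⁻¹) ^ n with hgdef
    have hsummand : ∀ n, trm bb n = g (n+1) - g n := by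
      intro n
      rw [hgdef]
      simp only []
      rw [htrm n, pow_succ]
      ring
    calc ∑ n ∈ Finset.range N, trm bb n = ∑ n ∈ Finset.range N, (g (n+1) - g n) :=
          Finset.sum_congr rfl (fun n _ => hsummand n)
      _ = g N - g 0 := Finset.sum_range_sub g N
      _ = (a N : ℝ) * ((2:ℝ)⁻¹) ^ N := by
          rw [hgdef]
          simp only []
          rw [ha0]
          push_cast
          ring
  have hclose : ∀ N, |y - ∑ n ∈ Finset.range N, trm bb n| ≤ ((2:ℝ)⁻¹) ^ N := by
    intro N
    rw [hpartial N]
    have h1 : (a N : ℝ) ≤ (2:ℝ) ^ N * y := Int.floor_le _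
    have h2 : (2:ℝ) ^ N * y < (a N : ℝ) + 1 := Int.lt_floor_add_one _
    have hp : (0:ℝ) < ((2:ℝ)⁻¹) ^ N := by positivity
    have hpp : ((2:ℝ)⁻¹) ^ N * (2:ℝ) ^ N = 1 := by
      rw [inv_pow, inv_mul_cancel₀ (by positivity)]
    rw [abs_le]
    constructor
    · have := mul_le_mul_of_nonneg_left h1 (le_of_lt hp)
      nlinarith
    · have := mul_le_mul_of_nonneg_left (le_of_lt h2) (le_of_lt hp)
      nlinarith
  have hlim : val bb = y := by
    have h1 : Filter.Tendsto (fun N => ∑ n ∈ Finset.range N, trm bb n) Filter.atTop (𝓝 (val bb)) :=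
      (summable_trm bb).hasSum.tendsto_sum_nat
    have h2 : Filter.Tendsto (fun N => ∑ n ∈ Finset.range N, trm bb n) Filter.atTop (𝓝 y) := by
      rw [tendsto_iff_dist_tendsto_zero]
      have hgeo : Filter.Tendsto (fun N : ℕ => ((2:ℝ)⁻¹) ^ N) Filter.atTop (𝓝 0) :=
        tendsto_pow_atTop_nhds_zero_of_lt_one (by norm_num) (by norm_num)
      refine squeeze_zero (fun N => dist_nonneg) (fun N => ?_) hgeo
      rw [Real.dist_eq, abs_sub_comm]
      exact hclose N
    exact tendsto_nhds_unique h1 h2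
  -- plant the digits into the free positions
  set D : ℕ → Bool := fun j => if freeP j then bb (F j) else false with hDdef
  have hDadm : Adm D := by
    intro j hz
    have : ¬ freeP j := fun hf => hf hz
    simp [hDdef, this]
  have hDval : (fun i => D (pth i)) = bb := by
    funext i
    have hfree : freeP (pth i) := Nat.nth_mem_of_infinite freeP_infinite i
    have hcount : F (pth i) = i := Nat.count_nth_of_infinite freeP_infinite i
    simp [hDdef, hfree, hcount]
  refine ⟨val D, ⟨D, hDadm, rfl⟩, ?_⟩
  rw [fA_val hDadm, hDval, hlim]

lemma coe_third : ((3⁻¹ : ℝ≥0) : ℝ≥0∞) = ENNReal.ofReal (1/3) := by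
  rw [show (1/3 : ℝ) = ((3⁻¹ : ℝ≥0) : ℝ) by norm_num, ENNReal.ofReal_coe_nnreal]

lemma lower_bound : ENNReal.ofReal (1/3) ≤ dimH (genSet L) := by
  have h1 : dimH (fA '' (genSet L)) ≤ dimH (genSet L) / ((3⁻¹ : ℝ≥0) : ℝ≥0∞) :=
    holderA.dimH_image_le (by norm_num)
  have h2 : (1 : ℝ≥0∞) ≤ dimH (fA '' (genSet L)) := by
    have hIco : dimH (Set.Ico (0:ℝ) 1) = 1 := by
      rw [Real.dimH_of_nonempty_interior]
      · norm_num
      · rw [interior_Ico]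
        exact ⟨1/2, by norm_num, by norm_num⟩
    calc (1:ℝ≥0∞) = dimH (Set.Ico (0:ℝ) 1) := hIco.symm
      _ ≤ dimH (fA '' (genSet L)) := dimH_mono image_Ico
  rw [← coe_third]
  have h3 : (1 : ℝ≥0∞) ≤ dimH (genSet L) / ((3⁻¹ : ℝ≥0) : ℝ≥0∞) := le_trans h2 h1
  have h4 := (ENNReal.le_div_iff_mul_le (Or.inl (by norm_num)) (Or.inl (by simp))).mp h3
  simpa using h4

/-! ### Upper bound -/

/-- end of the `n`-th zero block -/
def K (n : ℕ) : ℕ := bs n + 2 ^ n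

lemma FK (n : ℕ) : F (K n) + 1 = 2 ^ n := (F_bs n).2

lemma K_cast (n : ℕ) : (K n : ℝ) = 3 * 2 ^ n - 2 := by
  have h1 := bs_add_two n
  have h2 : K n + 2 = 3 * 2 ^ n := by
    rw [K]
    rw [pow_succ] at h1
    omega
  have := congrArg (fun m : ℕ => (m : ℝ)) h2
  push_cast at this
  linarith

lemma FK_cast (n : ℕ) : ((F (K n) : ℝ)) = 2 ^ n - 1 := by
  have := congrArg (fun m : ℕ => (m : ℝ)) (FK n)
  push_cast at this
  linarith

lemma agree_of_prefix {e e' : ℕ → Bool} (he : Adm e) (he' : Adm e') (n : ℕ)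
    (hc : ∀ i : Fin (F (K n)), e (pth i) = e' (pth i)) : ∀ j < K n, e j = e' j := by
  intro j hj
  by_cases hf : freeP j
  · have hjc : F j < F (K n) := Nat.count_strict_mono hf hj
    have hpj : pth (F j) = j := Nat.nth_count hf
    have := hc ⟨F j, hjc⟩
    simpa [hpj] using this
  · have hz : zeroPos L j := not_not.mp hf
    rw [he j hz, he' j hz]

lemma upper_bound : dimH (genSet L) ≤ ENNReal.ofReal (1/3) := by
  apply dimH_le
  intro dd hmu
  by_contra hgt
  push_neg at hgt
  have hdd3 : (1:ℝ) < 3 * (dd:ℝ) := by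
    rw [← coe_third] at hgt
    have h1 := ENNReal.coe_lt_coe.mp hgt
    have h2 : ((3⁻¹ : ℝ≥0) : ℝ) < ((dd : ℝ≥0) : ℝ) := h1
    have h3 : ((3⁻¹ : ℝ≥0) : ℝ) = (3:ℝ)⁻¹ := by norm_num
    rw [h3] at h2
    nlinarith [h2]
  suffices h0 : μH[(dd:ℝ)] (genSet L) = 0 by
    rw [hmu] at h0
    exact ENNReal.top_ne_zero h0
  classical
  -- the covering sets
  set t : ∀ n : ℕ, (Fin (F (K n)) → Bool) → Set ℝ :=
    fun n c => {x | ∃ e, Adm e ∧ x = val e ∧ ∀ i : Fin (F (K n)), e (pth i) = c i} with htdef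
  set r : ℕ → ℝ≥0∞ := fun n => ENNReal.ofReal (((2:ℝ)⁻¹) ^ (K n)) with hrdef
  have hrK : ∀ n : ℕ, n ≤ K n := fun n => le_trans (le_bs n) (Nat.le_add_right _ _)
  have hgeo : Filter.Tendsto (fun n : ℕ => ((2:ℝ)⁻¹) ^ n) Filter.atTop (𝓝 0) :=
    tendsto_pow_atTop_nhds_zero_of_lt_one (by norm_num) (by norm_num)
  have hrlim : Filter.Tendsto r Filter.atTop (𝓝 0) := by
    have h1 : Filter.Tendsto (fun n : ℕ => ((2:ℝ)⁻¹) ^ (K n)) Filter.atTop (𝓝 0) := by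
      refine squeeze_zero (fun n => by positivity) (fun n => ?_) hgeo
      exact pow_le_pow_of_le_one (by norm_num) (by norm_num) (hrK n)
    have h2 := ENNReal.tendsto_ofReal h1
    rw [ENNReal.ofReal_zero] at h2
    exact h2
  have hdiam : ∀ n : ℕ, ∀ c, EMetric.diam (t n c) ≤ r n := by
    intro n c
    apply EMetric.diam_le
    rintro x ⟨e, he, hxe, hce⟩ y ⟨e', he', hye, hce'⟩
    subst hxe; subst hye
    have hagree : ∀ j < K n, e j = e' j := by
      apply agree_of_prefix he he' n
      intro i
      rw [hce i, hce' i]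
    have := val_agree_below hagree
    rw [edist_dist, Real.dist_eq]
    exact ENNReal.ofReal_le_ofReal this
  have hcover : ∀ n : ℕ, genSet L ⊆ ⋃ c, t n c := by
    intro n x hx
    rw [mem_genSet] at hx
    obtain ⟨e, he, hxe⟩ := hx
    exact Set.mem_iUnion.mpr ⟨fun i => e (pth i), e, he, hxe, fun i => rfl⟩
  have hμle := MeasureTheory.Measure.hausdorffMeasure_le_liminf_sum (dd:ℝ) (genSet L) r hrlim t
    (Filter.Eventually.of_forall hdiam) (Filter.Eventually.of_forall hcover)
  -- bound the sums
  set u : ℕ → ℝ := fun n => (2:ℝ) ^ (F (K n)) * (((2:ℝ)⁻¹) ^ (K n)) ^ (dd:ℝ) with hudef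
  have hsum : ∀ n : ℕ, (∑ c : Fin (F (K n)) → Bool, EMetric.diam (t n c) ^ (dd:ℝ))
      ≤ ENNReal.ofReal (u n) := by
    intro n
    have hterm : ∀ c : Fin (F (K n)) → Bool,
        EMetric.diam (t n c) ^ (dd:ℝ) ≤ (r n) ^ (dd:ℝ) :=
      fun c => ENNReal.rpow_le_rpow (hdiam n c) (dd.coe_nonneg)
    calc (∑ c : Fin (F (K n)) → Bool, EMetric.diam (t n c) ^ (dd:ℝ))
        ≤ ∑ _c : Fin (F (K n)) → Bool, (r n) ^ (dd:ℝ) := Finset.sum_le_sum (fun c _ => hterm c)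
      _ = (Fintype.card (Fin (F (K n)) → Bool) : ℝ≥0∞) * (r n) ^ (dd:ℝ) := by
          rw [Finset.sum_const, nsmul_eq_mul]
          congr 1
          try simp [Finset.card_univ]
      _ = ENNReal.ofReal (u n) := by
          rw [Fintype.card_fun]
          simp only [Fintype.card_bool, Fintype.card_fin]
          rw [hudef, hrdef]
          simp only []
          rw [ENNReal.ofReal_rpow_of_pos (by positivity)]
          rw [ENNReal.ofReal_mul (by positivity)]
          congr 1
          rw [ENNReal.ofReal_pow (by norm_num)]
          push_cast
          norm_num
  have hulim : Filter.Tendsto u Filter.atTop (𝓝 0) := by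
    set w : ℕ → ℝ := fun n => (F (K n) : ℝ) - (dd:ℝ) * (K n) with hwdef
    have hueq : ∀ n, u n = (2:ℝ) ^ (w n) := by
      intro n
      rw [hudef, hwdef]
      simp only []
      rw [inv_pow]
      rw [← Real.rpow_natCast (2:ℝ) (F (K n)), ← Real.rpow_natCast (2:ℝ) (K n)]
      rw [← Real.rpow_neg (by norm_num : (0:ℝ) ≤ 2)]
      rw [← Real.rpow_mul (by norm_num : (0:ℝ) ≤ 2)]
      rw [← Real.rpow_add (by norm_num : (0:ℝ) < 2)]
      congr 1
      push_cast
      ring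
    have hwbot : Filter.Tendsto w Filter.atTop Filter.atBot := by
      have hweq : ∀ n : ℕ, w n = (2:ℝ) ^ n * (1 - 3 * (dd:ℝ)) + (2 * (dd:ℝ) - 1) := by
        intro n
        rw [hwdef]
        simp only []
        rw [FK_cast, K_cast]
        ring
      have hpow2 : Filter.Tendsto (fun n : ℕ => (2:ℝ) ^ n) Filter.atTop Filter.atTop :=
        tendsto_pow_atTop_atTop_of_one_lt (by norm_num)
      have hmul : Filter.Tendsto (fun n : ℕ => (2:ℝ) ^ n * (1 - 3 * (dd:ℝ)))
          Filter.atTop Filter.atBot :=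
        Filter.Tendsto.atTop_mul_const_of_neg' (by linarith) hpow2
      have := Filter.tendsto_atBot_add_const_right Filter.atTop (2 * (dd:ℝ) - 1) hmul
      exact Filter.Tendsto.congr (fun n => (hweq n).symm) this
    have hexp : Filter.Tendsto (fun n => Real.exp (Real.log 2 * w n)) Filter.atTop (𝓝 0) := by
      apply Real.tendsto_exp_atBot.comp
      apply Filter.Tendsto.const_mul_atBot (by positivity : (0:ℝ) < Real.log 2) hwbot
    apply Filter.Tendsto.congr _ hexp
    intro n
    rw [hueq n, Real.rpow_def_of_pos (by norm_num : (0:ℝ) < 2)]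
  have hliminf : Filter.liminf (fun n => ENNReal.ofReal (u n)) Filter.atTop = 0 := by
    have := ENNReal.tendsto_ofReal hulim
    rw [ENNReal.ofReal_zero] at this
    exact this.liminf_eq
  have hfinal : μH[(dd:ℝ)] (genSet L) ≤ 0 := by
    calc μH[(dd:ℝ)] (genSet L)
        ≤ Filter.liminf (fun n => ∑ c : Fin (F (K n)) → Bool, EMetric.diam (t n c) ^ (dd:ℝ))
          Filter.atTop := hμle
      _ ≤ Filter.liminf (fun n => ENNReal.ofReal (u n)) Filter.atTop :=
          Filter.liminf_le_liminf (Filter.Eventually.of_forall hsum)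
      _ = 0 := hliminf
  exact le_antisymm hfinal (zero_le)

end S18

theorem stmt_18 : dimH (genSet (fun n => 2 ^ n)) = ENNReal.ofReal (1 / 3) :=
  le_antisymm S18.upper_bound S18.lower_bound
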